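/- Let I be a finite index set, let s ∈ ℕ, and let A be an I×I complex matrix whose ℓ²→ℓ² operator norm satisfies ‖A‖ ≤ 1 and such that every row and every column of A contains at most s nonzero entries. Let ψ, φ : I → ℂ be unit vectors (Σ|ψ(x)|² = 1 = Σ|φ(y)|²), and set p(x) = |ψ(x)|², q(y) = |φ(y)|². Define F(x) = (ψ(x)/p(x)) · Σ_{y : p(x) ≥ q(y)} conj(φ(y))·A(y,x) and G(y) = (conj(φ(y))/q(y)) · Σ_{x : p(x) < q(y)} A(y,x)·ψ(x), with the convention 0/0 = 0. Then ⟨φ, Aψ⟩ := Σ_{y,x} conj(φ(y))·A(y,x)·ψ(x) = Σ_x p(x)·F(x) + Σ_y q(y)·G(y), and |F(x)| ≤ s and |G(y)| ≤ s for all x, y ∈ I. -/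

import Mathlib

open scoped InnerProductSpace Matrix

lemma entry_le_opNorm {I : Type*} [Fintype I] [DecidableEq I] (A : Matrix I I ℂ) (y x : I) :
    ‖A y x‖ ≤ ‖Matrix.toEuclideanCLM (𝕜 := ℂ) A‖ := by
  classical
  set T := Matrix.toEuclideanCLM (𝕜 := ℂ) A
  have hx : T (EuclideanSpace.single x 1) = (WithLp.equiv 2 _).symm (A *ᵥ Pi.single x 1) := by
    rw [show (EuclideanSpace.single x (1:ℂ)) = (WithLp.equiv 2 _).symm (Pi.single x 1) from rfl]
    exact Matrix.toEuclideanCLM_toLp A _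
  have key : (⟪EuclideanSpace.single y (1:ℂ), T (EuclideanSpace.single x 1)⟫_ℂ) = A y x := by
    rw [EuclideanSpace.inner_single_left, hx]
    simp [Matrix.mulVec_single]
  calc ‖A y x‖ = ‖(⟪EuclideanSpace.single y (1:ℂ), T (EuclideanSpace.single x 1)⟫_ℂ)‖ := by
        rw [key]
    _ ≤ ‖EuclideanSpace.single y (1:ℂ)‖ * ‖T (EuclideanSpace.single x 1)‖ := norm_inner_le_norm _ _
    _ = ‖T (EuclideanSpace.single x (1:ℂ))‖ := by simp
    _ ≤ ‖T‖ * ‖EuclideanSpace.single x (1:ℂ)‖ := T.le_opNorm _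
    _ = ‖T‖ := by rw [EuclideanSpace.norm_single, norm_one, mul_one]

theorem sparse_matrix_element_decomposition {I : Type*} [Fintype I] [DecidableEq I]
    (s : ℕ) (A : Matrix I I ℂ)
    (hA : ‖Matrix.toEuclideanCLM (𝕜 := ℂ) A‖ ≤ 1)
    (hrow : ∀ y, {x | A y x ≠ 0}.ncard ≤ s)
    (hcol : ∀ x, {y | A y x ≠ 0}.ncard ≤ s)
    (ψ φ : I → ℂ)
    (hψ : ∑ x, ‖ψ x‖ ^ 2 = 1)
    (hφ : ∑ y, ‖φ y‖ ^ 2 = 1)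
    (p q : I → ℝ)
    (hp : ∀ x, p x = ‖ψ x‖ ^ 2)
    (hq : ∀ y, q y = ‖φ y‖ ^ 2)
    (F G : I → ℂ)
    (hF : ∀ x, F x = ψ x / (p x : ℂ) * ∑ y, (if q y ≤ p x then (starRingEnd ℂ) (φ y) * A y x else 0))
    (hG : ∀ y, G y = (starRingEnd ℂ) (φ y) / (q y : ℂ) * ∑ x, (if p x < q y then A y x * ψ x else 0)) :
    (∑ y, ∑ x, (starRingEnd ℂ) (φ y) * A y x * ψ x)
      = ∑ x, (p x : ℂ) * F x + ∑ y, (q y : ℂ) * G y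
    ∧ (∀ x, ‖F x‖ ≤ s) ∧ (∀ y, ‖G y‖ ≤ s) := by
  classical
  have hentry : ∀ y x, ‖A y x‖ ≤ 1 :=
    fun y x => (entry_le_opNorm A y x).trans hA
  -- rewrite p x * F x
  have hpF : ∀ x, (p x : ℂ) * F x
      = ∑ y, (if q y ≤ p x then (starRingEnd ℂ) (φ y) * A y x * ψ x else 0) := by
    intro x
    rw [hF]
    by_cases hψx : ψ x = 0
    · simp [hψx, hp x]
    · have hpx : (p x : ℂ) ≠ 0 := by
        simp only [hp x, ne_eq, Complex.ofReal_eq_zero]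
        exact pow_ne_zero 2 (norm_ne_zero_iff.mpr hψx)
      rw [show (p x : ℂ) * (ψ x / (p x : ℂ) * ∑ y, (if q y ≤ p x then (starRingEnd ℂ) (φ y) * A y x else 0))
          = ψ x * ∑ y, (if q y ≤ p x then (starRingEnd ℂ) (φ y) * A y x else 0) by
        field_simp]
      rw [Finset.mul_sum]
      refine Finset.sum_congr rfl fun y _ => ?_
      rw [mul_ite, mul_zero]
      ring_nf
  have hqG : ∀ y, (q y : ℂ) * G y
      = ∑ x, (if p x < q y then (starRingEnd ℂ) (φ y) * A y x * ψ x else 0) := by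
    intro y
    rw [hG]
    by_cases hφy : φ y = 0
    · simp [hφy, hq y]
    · have hqy : (q y : ℂ) ≠ 0 := by
        simp only [hq y, ne_eq, Complex.ofReal_eq_zero]
        exact pow_ne_zero 2 (norm_ne_zero_iff.mpr hφy)
      rw [show (q y : ℂ) * ((starRingEnd ℂ) (φ y) / (q y : ℂ) * ∑ x, (if p x < q y then A y x * ψ x else 0))
          = (starRingEnd ℂ) (φ y) * ∑ x, (if p x < q y then A y x * ψ x else 0) by
        field_simp]
      rw [Finset.mul_sum]
      refine Finset.sum_congr rfl fun x _ => ?_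
      rw [mul_ite, mul_zero]
      ring_nf
  refine ⟨?_, ?_, ?_⟩
  · -- decomposition
    simp only [hpF, hqG]
    rw [Finset.sum_comm (s := Finset.univ) (t := Finset.univ)
      (f := fun x y => if q y ≤ p x then (starRingEnd ℂ) (φ y) * A y x * ψ x else 0)]
    rw [← Finset.sum_add_distrib]
    refine Finset.sum_congr rfl fun y _ => ?_
    rw [← Finset.sum_add_distrib]
    refine Finset.sum_congr rfl fun x _ => ?_
    by_cases h : q y ≤ p x
    · simp [h, not_lt.mpr h]
    · simp [h, not_le.mp h]
  · -- |F x| ≤ s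
    intro x
    by_cases hψx : ψ x = 0
    · simp [hF x, hψx]
    · have hpx : 0 < p x := by rw [hp x]; exact pow_pos (norm_pos_iff.mpr hψx) 2
      set T : Finset I := Finset.univ.filter (fun y => A y x ≠ 0) with hT
      have hTcard : T.card ≤ s := by
        have := hcol x
        rwa [Set.ncard_eq_toFinset_card', Set.toFinset_setOf] at this
      have hterm : ∀ y, ‖if q y ≤ p x then (starRingEnd ℂ) (φ y) * A y x else 0‖
          ≤ ‖ψ x‖ := by
        intro y
        by_cases h : q y ≤ p x
        · rw [if_pos h, norm_mul]
          have h1 : ‖(starRingEnd ℂ) (φ y)‖ ≤ ‖ψ x‖ := by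
            rw [Complex.norm_conj]
            refine le_of_pow_le_pow_left₀ two_ne_zero (norm_nonneg _) ?_
            rw [← hp x, ← hq y]; exact h
          calc ‖(starRingEnd ℂ) (φ y)‖ * ‖A y x‖
              ≤ ‖ψ x‖ * 1 := by
                apply mul_le_mul h1 (hentry y x) (norm_nonneg _) (norm_nonneg _)
            _ = ‖ψ x‖ := mul_one _
        · rw [if_neg h, norm_zero]; exact norm_nonneg _
      have hsum : ‖∑ y, (if q y ≤ p x then (starRingEnd ℂ) (φ y) * A y x else 0)‖
          ≤ s * ‖ψ x‖ := by
        have heq : (∑ y, (if q y ≤ p x then (starRingEnd ℂ) (φ y) * A y x else 0))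
            = ∑ y ∈ T, (if q y ≤ p x then (starRingEnd ℂ) (φ y) * A y x else 0) := by
          refine (Finset.sum_subset (Finset.subset_univ T) fun y _ hy => ?_).symm
          have : A y x = 0 := by simpa [hT] using hy
          simp [this]
        rw [heq]
        calc ‖∑ y ∈ T, (if q y ≤ p x then (starRingEnd ℂ) (φ y) * A y x else 0)‖
            ≤ ∑ y ∈ T, ‖if q y ≤ p x then (starRingEnd ℂ) (φ y) * A y x else 0‖ :=
              norm_sum_le _ _
          _ ≤ ∑ _y ∈ T, ‖ψ x‖ := Finset.sum_le_sum fun y _ => hterm y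
          _ = T.card * ‖ψ x‖ := by rw [Finset.sum_const, nsmul_eq_mul]
          _ ≤ s * ‖ψ x‖ := by
              apply mul_le_mul_of_nonneg_right _ (norm_nonneg _)
              exact_mod_cast hTcard
      rw [hF x, norm_mul, norm_div, Complex.norm_real, Real.norm_eq_abs, abs_of_pos hpx]
      calc ‖ψ x‖ / p x * ‖∑ y, (if q y ≤ p x then (starRingEnd ℂ) (φ y) * A y x else 0)‖
          ≤ ‖ψ x‖ / p x * (s * ‖ψ x‖) := by
            apply mul_le_mul_of_nonneg_left hsum (by positivity)
        _ = s := by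
            rw [hp x]
            have : ‖ψ x‖ ≠ 0 := norm_ne_zero_iff.mpr hψx
            field_simp
  · -- |G y| ≤ s
    intro y
    by_cases hφy : φ y = 0
    · simp [hG y, hφy]
    · have hqy : 0 < q y := by rw [hq y]; exact pow_pos (norm_pos_iff.mpr hφy) 2
      set T : Finset I := Finset.univ.filter (fun x => A y x ≠ 0) with hT
      have hTcard : T.card ≤ s := by
        have := hrow y
        rwa [Set.ncard_eq_toFinset_card', Set.toFinset_setOf] at this
      have hterm : ∀ x, ‖if p x < q y then A y x * ψ x else 0‖
          ≤ ‖φ y‖ := by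
        intro x
        by_cases h : p x < q y
        · rw [if_pos h, norm_mul]
          have h1 : ‖ψ x‖ ≤ ‖φ y‖ := by
            refine le_of_pow_le_pow_left₀ two_ne_zero (norm_nonneg _) ?_
            rw [← hp x, ← hq y]; exact le_of_lt h
          calc ‖A y x‖ * ‖ψ x‖
              ≤ 1 * ‖φ y‖ := by
                apply mul_le_mul (hentry y x) h1 (norm_nonneg _) zero_le_one
            _ = ‖φ y‖ := one_mul _
        · rw [if_neg h, norm_zero]; exact norm_nonneg _
      have hsum : ‖∑ x, (if p x < q y then A y x * ψ x else 0)‖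
          ≤ s * ‖φ y‖ := by
        have heq : (∑ x, (if p x < q y then A y x * ψ x else 0))
            = ∑ x ∈ T, (if p x < q y then A y x * ψ x else 0) := by
          refine (Finset.sum_subset (Finset.subset_univ T) fun x _ hx => ?_).symm
          have : A y x = 0 := by simpa [hT] using hx
          simp [this]
        rw [heq]
        calc ‖∑ x ∈ T, (if p x < q y then A y x * ψ x else 0)‖
            ≤ ∑ x ∈ T, ‖if p x < q y then A y x * ψ x else 0‖ :=
              norm_sum_le _ _
          _ ≤ ∑ _x ∈ T, ‖φ y‖ := Finset.sum_le_sum fun x _ => hterm x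
          _ = T.card * ‖φ y‖ := by rw [Finset.sum_const, nsmul_eq_mul]
          _ ≤ s * ‖φ y‖ := by
              apply mul_le_mul_of_nonneg_right _ (norm_nonneg _)
              exact_mod_cast hTcard
      rw [hG y, norm_mul, norm_div, Complex.norm_real, Real.norm_eq_abs, abs_of_pos hqy, Complex.norm_conj]
      calc ‖φ y‖ / q y * ‖∑ x, (if p x < q y then A y x * ψ x else 0)‖
          ≤ ‖φ y‖ / q y * (s * ‖φ y‖) := by
            apply mul_le_mul_of_nonneg_left hsum (by positivity)
        _ = s := by
            rw [hq y]
            have : ‖φ y‖ ≠ 0 := norm_ne_zero_iff.mpr hφy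
            field_simp
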